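/- arXiv:2310.00782 — 3 statements merged into one kernel-verified Lean document; each statement's English description precedes it below -/
import Mathlib

section
/- Let Q_0 = V, let h_0, h_1, …, h_k be positive integers with 2·h_{i-1} ≤ h_i for each i ≥ 1, and let Q_1, …, Q_k ⊆ V be sets such that Q_i is a blocker set for the h_{i-1}-hop shortest paths from sources Q_{i-1}, i.e., every shortest path of exactly h_{i-1} hops starting at a node of Q_{i-1} contains a node of Q_i. Assume moreover that every shortest path in G has at most h_k hops. Then for every pair of nodes s, t with a shortest path between them, there exist an index j ∈ {0,…,k} and a node q ∈ Q_j such that δ(s,t) = δ^{h_j}(s,q) + δ^{h_j}(q,t). -/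
open scoped ENNReal

variable {V : Type*}

/-- `p` is a walk from `s` to `t` along edges of `E`. -/
def IsWalkFrom (E : V → V → Prop) (s t : V) (p : List V) : Prop :=
  List.Chain E s p ∧ (s :: p).getLast (List.cons_ne_nil s p) = t

/-- Total weight of the walk `s :: p`. -/
noncomputable def walkWeight (w : V → V → NNReal) (s : V) (p : List V) : ℝ≥0∞ :=
  (List.zipWith (fun a b => ((w a b : ℝ≥0∞))) (s :: p) p).sum

/-- `h`-hop-bounded shortest-path distance (`⊤` if no walk with at most `h` edges exists). -/
noncomputable def hopDist (E : V → V → Prop) (w : V → V → NNReal) (h : ℕ) (s t : V) : ℝ≥0∞ :=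
  ⨅ (p : List V) (_ : IsWalkFrom E s t p) (_ : p.length ≤ h), walkWeight w s p

/-- Shortest-path distance (`⊤` if no walk exists). -/
noncomputable def gdist (E : V → V → Prop) (w : V → V → NNReal) (s t : V) : ℝ≥0∞ :=
  ⨅ (p : List V) (_ : IsWalkFrom E s t p), walkWeight w s p

/-- `c` is a simple (directed) cycle through `v`: a closed walk from `v` to `v`
with at least one edge and no repeated vertices. -/
def IsCycleThrough (E : V → V → Prop) (v : V) (c : List V) : Prop :=
  IsWalkFrom E v v c ∧ c ≠ [] ∧ c.Nodup

/-- `c` is a simple cycle through `v` in an undirected graph (at least 3 edges,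
so that no edge is traversed twice). -/
def IsUCycleThrough (E : V → V → Prop) (v : V) (c : List V) : Prop :=
  IsWalkFrom E v v c ∧ 3 ≤ c.length ∧ c.Nodup

/-- The (undirected) edge `{a, b}` appears on the walk `s :: p`. -/
def MemEdge (s : V) (p : List V) (a b : V) : Prop :=
  ∃ i, i + 1 ≤ p.length ∧
    ((a = (s :: p).getD i s ∧ b = (s :: p).getD (i + 1) s) ∨
     (b = (s :: p).getD i s ∧ a = (s :: p).getD (i + 1) s))

lemma walkWeight_nil (w : V → V → NNReal) (s : V) : walkWeight w s [] = 0 := rfl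

lemma walkWeight_cons (w : V → V → NNReal) (s a : V) (p : List V) :
    walkWeight w s (a :: p) = (w s a : ℝ≥0∞) + walkWeight w a p := by
  simp [walkWeight]

lemma walkWeight_ne_top (w : V → V → NNReal) (s : V) (p : List V) :
    walkWeight w s p ≠ ⊤ := by
  induction p generalizing s with
  | nil => simp [walkWeight]
  | cons a p ih =>
    rw [walkWeight_cons]
    exact ENNReal.add_ne_top.2 ⟨ENNReal.coe_ne_top, ih a⟩

lemma isWalkFrom_nil (E : V → V → Prop) (s : V) : IsWalkFrom E s s [] :=
  ⟨List.Chain.nil, rfl⟩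

lemma isWalkFrom_nil_iff {E : V → V → Prop} {s t : V} : IsWalkFrom E s t [] ↔ s = t := by
  constructor
  · rintro ⟨-, h⟩; simpa using h
  · rintro rfl; exact isWalkFrom_nil E s

lemma isWalkFrom_cons {E : V → V → Prop} {s t a : V} {p : List V} :
    IsWalkFrom E s t (a :: p) ↔ E s a ∧ IsWalkFrom E a t p := by
  constructor
  · rintro ⟨hc, hl⟩
    unfold List.Chain at hc
    rw [List.chain_cons] at hc
    refine ⟨hc.1, hc.2, ?_⟩
    rw [← hl, List.getLast_cons (List.cons_ne_nil a p)]
  · rintro ⟨he, hc, hl⟩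
    refine ⟨List.chain_cons.2 ⟨he, hc⟩, ?_⟩
    rw [List.getLast_cons (List.cons_ne_nil a p)]
    exact hl

lemma isWalkFrom_append {E : V → V → Prop} (w : V → V → NNReal) {s q t : V} {p1 p2 : List V}
    (h1 : IsWalkFrom E s q p1) (h2 : IsWalkFrom E q t p2) :
    IsWalkFrom E s t (p1 ++ p2) ∧
      walkWeight w s (p1 ++ p2) = walkWeight w s p1 + walkWeight w q p2 := by
  induction p1 generalizing s with
  | nil =>
    obtain rfl := isWalkFrom_nil_iff.1 h1
    simpa [walkWeight_nil] using h2
  | cons a p ih =>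
    rw [isWalkFrom_cons] at h1
    obtain ⟨he, h1'⟩ := h1
    obtain ⟨hw, hwt⟩ := ih h1'
    refine ⟨isWalkFrom_cons.2 ⟨he, hw⟩, ?_⟩
    rw [List.cons_append, walkWeight_cons, walkWeight_cons, hwt, add_assoc]

lemma isWalkFrom_split {E : V → V → Prop} (w : V → V → NNReal) :
    ∀ (p : List V) (s t : V) (d : ℕ), d ≤ p.length → IsWalkFrom E s t p →
      IsWalkFrom E s ((s :: p).getD d s) (p.take d) ∧
      IsWalkFrom E ((s :: p).getD d s) t (p.drop d) ∧
      walkWeight w s p =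
        walkWeight w s (p.take d) + walkWeight w ((s :: p).getD d s) (p.drop d)
  | p, s, t, 0, _, hw => by
    simpa [walkWeight_nil] using ⟨isWalkFrom_nil E s, hw⟩
  | [], s, t, d+1, hd, hw => by simp at hd
  | a :: p, s, t, d+1, hd, hw => by
    rw [isWalkFrom_cons] at hw
    obtain ⟨he, hw⟩ := hw
    have hd' : d ≤ p.length := by simpa using hd
    obtain ⟨h1, h2, h3⟩ := isWalkFrom_split w p a t d hd' hw
    have hlt : d < (a :: p).length := by simp; omega
    have hq : (s :: a :: p).getD (d+1) s = (a :: p).getD d a := by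
      rw [List.getD_cons_succ, List.getD_eq_getElem _ _ hlt, List.getD_eq_getElem _ _ hlt]
    rw [hq, List.take_succ_cons, List.drop_succ_cons]
    refine ⟨isWalkFrom_cons.2 ⟨he, h1⟩, h2, ?_⟩
    rw [walkWeight_cons, walkWeight_cons, h3, add_assoc]

lemma gdist_le_walkWeight {E : V → V → Prop} {w : V → V → NNReal} {s t : V} {p : List V}
    (hw : IsWalkFrom E s t p) : gdist E w s t ≤ walkWeight w s p := by
  unfold gdist
  exact iInf_le_of_le p (iInf_le_of_le hw le_rfl)

lemma hopDist_le_walkWeight {E : V → V → Prop} {w : V → V → NNReal} {n : ℕ} {s t : V}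
    {p : List V} (hw : IsWalkFrom E s t p) (hl : p.length ≤ n) :
    hopDist E w n s t ≤ walkWeight w s p := by
  unfold hopDist
  exact iInf_le_of_le p (iInf_le_of_le hw (iInf_le_of_le hl le_rfl))

lemma gdist_le_hopDist {E : V → V → Prop} {w : V → V → NNReal} {n : ℕ} {s t : V} :
    gdist E w s t ≤ hopDist E w n s t := by
  unfold hopDist
  exact le_iInf fun p => le_iInf fun hw => le_iInf fun _ => gdist_le_walkWeight hw

lemma exists_walk_lt {E : V → V → Prop} {w : V → V → NNReal} {s q : V} {c : ℝ≥0∞}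
    (hlt : gdist E w s q < c) : ∃ p, IsWalkFrom E s q p ∧ walkWeight w s p < c := by
  unfold gdist at hlt
  rw [iInf_lt_iff] at hlt
  obtain ⟨p, hp⟩ := hlt
  rw [iInf_lt_iff] at hp
  obtain ⟨hw, hlt⟩ := hp
  exact ⟨p, hw, hlt⟩

lemma split_shortest {E : V → V → Prop} {w : V → V → NNReal} {s q t : V} {p1 p2 : List V}
    (h1 : IsWalkFrom E s q p1) (h2 : IsWalkFrom E q t p2)
    (hsum : walkWeight w s p1 + walkWeight w q p2 = gdist E w s t) :
    walkWeight w s p1 = gdist E w s q ∧ walkWeight w q p2 = gdist E w q t := by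
  constructor
  · by_contra hne
    have hlt : gdist E w s q < walkWeight w s p1 :=
      lt_of_le_of_ne (gdist_le_walkWeight h1) fun hh => hne hh.symm
    obtain ⟨p', hp', hlt'⟩ := exists_walk_lt hlt
    obtain ⟨hw, hwt⟩ := isWalkFrom_append w hp' h2
    have hle := gdist_le_walkWeight (w := w) hw
    rw [hwt] at hle
    have : gdist E w s t < gdist E w s t := by
      calc gdist E w s t ≤ walkWeight w s p' + walkWeight w q p2 := hle
        _ < walkWeight w s p1 + walkWeight w q p2 :=
          ENNReal.add_lt_add_right (walkWeight_ne_top w q p2) hlt'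
        _ = gdist E w s t := hsum
    exact absurd this (lt_irrefl _)
  · by_contra hne
    have hlt : gdist E w q t < walkWeight w q p2 :=
      lt_of_le_of_ne (gdist_le_walkWeight h2) fun hh => hne hh.symm
    obtain ⟨p', hp', hlt'⟩ := exists_walk_lt hlt
    obtain ⟨hw, hwt⟩ := isWalkFrom_append w h1 hp'
    have hle := gdist_le_walkWeight (w := w) hw
    rw [hwt] at hle
    have : gdist E w s t < gdist E w s t := by
      calc gdist E w s t ≤ walkWeight w s p1 + walkWeight w q p' := hle
        _ < walkWeight w s p1 + walkWeight w q p2 :=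
          ENNReal.add_lt_add_left (walkWeight_ne_top w s p1) hlt'
        _ = gdist E w s t := hsum
    exact absurd this (lt_irrefl _)

theorem stmt3 (E : V → V → Prop) (w : V → V → NNReal)
    (Q : ℕ → Set V) (h : ℕ → ℕ) (k : ℕ)
    (hQ0 : Q 0 = Set.univ)
    (hpos : ∀ i, 0 < h i)
    (hgrow : ∀ i, 1 ≤ i → i ≤ k → 2 * h (i - 1) ≤ h i)
    (hblock : ∀ i, 1 ≤ i → i ≤ k → ∀ s' ∈ Q (i - 1), ∀ (t' : V) (p : List V),
      IsWalkFrom E s' t' p → p.length = h (i - 1) →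
      walkWeight w s' p = gdist E w s' t' → ∃ x ∈ s' :: p, x ∈ Q i)
    (hbound : ∀ (s t : V) (p : List V), IsWalkFrom E s t p →
      walkWeight w s p = gdist E w s t → p.length ≤ h k)
    (s t : V)
    (hst : ∃ p : List V, IsWalkFrom E s t p ∧ walkWeight w s p = gdist E w s t) :
    ∃ j ≤ k, ∃ q ∈ Q j,
      gdist E w s t = hopDist E w (h j) s q + hopDist E w (h j) q t := by
  have hsum_le : ∀ i ≤ k, ∑ l ∈ Finset.range i, h l ≤ h i := by
    intro i
    induction i with
    | zero => intro _; simpa using (hpos 0).le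
    | succ i ih =>
      intro hik
      rw [Finset.sum_range_succ]
      have h1 := ih (by omega)
      have h2 := hgrow (i+1) (by omega) hik
      simp only [Nat.add_sub_cancel] at h2
      omega
  have main : ∀ m i, i + m = k → ∀ q ∈ Q i, ∀ pre suf : List V,
      IsWalkFrom E s q pre → IsWalkFrom E q t suf →
      pre.length ≤ ∑ l ∈ Finset.range i, h l →
      walkWeight w s pre + walkWeight w q suf = gdist E w s t →
      walkWeight w q suf = gdist E w q t →
      ∃ j ≤ k, ∃ q' ∈ Q j, ∃ pre' suf' : List V,
        IsWalkFrom E s q' pre' ∧ IsWalkFrom E q' t suf' ∧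
        pre'.length ≤ h j ∧ suf'.length ≤ h j ∧
        walkWeight w s pre' + walkWeight w q' suf' = gdist E w s t := by
    intro m
    induction m with
    | zero =>
      intro i hik q hq pre suf hpre hsuf hlen hsum hqt
      have hik' : i = k := by omega
      refine ⟨i, by omega, q, hq, pre, suf, hpre, hsuf,
        le_trans hlen (hsum_le i (by omega)), ?_, hsum⟩
      rw [hik']
      exact hbound q t suf hsuf hqt
    | succ m ih =>
      intro i hik q hq pre suf hpre hsuf hlen hsum hqt
      by_cases hstop : suf.length ≤ h i
      · exact ⟨i, by omega, q, hq, pre, suf, hpre, hsuf,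
          le_trans hlen (hsum_le i (by omega)), hstop, hsum⟩
      · push_neg at hstop
        have hd : h i ≤ suf.length := hstop.le
        obtain ⟨hseg, hrest, hwsplit⟩ := isWalkFrom_split w suf q t (h i) hd hsuf
        set q2 := (q :: suf).getD (h i) q with hq2
        have hseglen : (suf.take (h i)).length = h i := by
          rw [List.length_take]; omega
        have hshort := split_shortest hseg hrest (by rw [← hwsplit]; exact hqt)
        have hblk := hblock (i+1) (by omega) (by omega)
        simp only [Nat.add_sub_cancel] at hblk
        obtain ⟨x, hxmem, hxQ⟩ := hblk q hq q2 (suf.take (h i)) hseg hseglen hshort.1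
        rw [List.mem_iff_getElem] at hxmem
        obtain ⟨e, helt, hxe⟩ := hxmem
        have helen : e ≤ h i := by
          simp only [List.length_cons, hseglen] at helt; omega
        have hesuf : e ≤ suf.length := le_trans helen hd
        have hx : (q :: suf).getD e q = x := by
          have heq : (q :: suf.take (h i)) = (q :: suf).take (h i + 1) := by
            rw [List.take_succ_cons]
          have h5 : x = ((q :: suf).take (h i + 1))[e]'(heq ▸ helt) := by
            rw [← hxe]; exact List.getElem_of_eq heq helt
          rw [List.getD_eq_getElem _ _ (show e < (q :: suf).length by simp; omega), h5,
            List.getElem_take]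
        obtain ⟨hp1, hp2, hwsplit2⟩ := isWalkFrom_split w suf q t e hesuf hsuf
        rw [hx] at hp1 hp2 hwsplit2
        have hx2 := split_shortest hp1 hp2 (by rw [← hwsplit2]; exact hqt)
        obtain ⟨hpre', hwpre'⟩ := isWalkFrom_append w hpre hp1
        apply ih (i+1) (by omega) x hxQ (pre ++ suf.take e) (suf.drop e) hpre' hp2
        · rw [List.length_append, Finset.sum_range_succ]
          have hl2 : (suf.take e).length ≤ h i := by rw [List.length_take]; omega
          omega
        · rw [hwpre', add_assoc, ← hwsplit2]; exact hsum
        · exact hx2.2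
  obtain ⟨p, hp, hps⟩ := hst
  obtain ⟨j, hjk, q, hqQ, pre, suf, hpre, hsuf, hlp, hls, hsum⟩ :=
    main k 0 (by omega) s (by simp [hQ0]) [] p (isWalkFrom_nil E s) hp (by simp)
      (by rw [walkWeight_nil, zero_add]; exact hps) hps
  have hd := split_shortest hpre hsuf hsum
  refine ⟨j, hjk, q, hqQ, ?_⟩
  have h1 : hopDist E w (h j) s q = walkWeight w s pre :=
    le_antisymm (hopDist_le_walkWeight hpre hlp) (hd.1 ▸ gdist_le_hopDist)
  have h2 : hopDist E w (h j) q t = walkWeight w q suf :=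
    le_antisymm (hopDist_le_walkWeight hsuf hls) (hd.2 ▸ gdist_le_hopDist)
  rw [← hsum, h1, h2]
end

section
/- (Critical edge lemma) Let C = (v_1, …, v_l) be a minimum-weight cycle in an undirected graph G with non-negative weights and let s be a node of C. Then there exists an edge (v_i, v_{i+1}) of C such that the distance along C from s to v_i satisfies ⌈wt(C)/2⌉ − w(v_i,v_{i+1}) ≤ δ_C(s,v_i) ≤ ⌊wt(C)/2⌋ and similarly ⌈wt(C)/2⌉ − w(v_i,v_{i+1}) ≤ δ_C(v_{i+1},s) ≤ ⌊wt(C)/2⌋; moreover δ(s,v_i) = δ_C(s,v_i) and δ(v_{i+1},s) = δ_C(v_{i+1},s), i.e., both arcs of C from s to the endpoints of this edge are shortest paths in G. -/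
open scoped ENNReal

variable {V : Type*}

/-- Total weight of the walk `s :: p` with natural-number weights. -/
def natWalkWeight (w : V → V → ℕ) (s : V) (p : List V) : ℕ :=
  (List.zipWith w (s :: p) p).sum

section CritAux
open List


/-- Sum of edge weights along consecutive pairs of `L`. -/
def cwAux (w : V → V → ℕ) (L : List V) : ℕ := (List.zipWith w L L.tail).sum

@[simp] theorem cwAux_nil (w : V → V → ℕ) : cwAux w ([] : List V) = 0 := rfl
@[simp] theorem cwAux_single (w : V → V → ℕ) (a : V) : cwAux w [a] = 0 := rfl
@[simp] theorem cwAux_cons_cons (w : V → V → ℕ) (a b : V) (l : List V) :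
    cwAux w (a :: b :: l) = w a b + cwAux w (b :: l) := rfl

theorem cwAux_split (w : V → V → ℕ) (x : V) (B : List V) :
    ∀ A : List V, cwAux w (A ++ x :: B) = cwAux w (A ++ [x]) + cwAux w (x :: B)
  | [] => by simp
  | [a] => by simp [Nat.add_assoc]
  | a :: b :: A => by
      have := cwAux_split w x B (b :: A)
      simp only [cons_append, cwAux_cons_cons] at *
      omega

theorem cwAux_concat (w : V → V → ℕ) (x : V) :
    ∀ (A : List V) (h : A ≠ []), cwAux w (A ++ [x]) = cwAux w A + w (A.getLast h) x
  | [], h => absurd rfl h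
  | [a], _ => by simp
  | a :: b :: A, _ => by
      have := cwAux_concat w x (b :: A) (by simp)
      simp only [cons_append, cwAux_cons_cons, getLast_cons (cons_ne_nil b A)] at *
      omega

theorem cwAux_reverse (w : V → V → ℕ) (hw : ∀ a b, w a b = w b a) :
    ∀ L : List V, cwAux w L.reverse = cwAux w L
  | [] => rfl
  | [a] => rfl
  | a :: b :: L => by
      have h1 : (a :: b :: L).reverse = (b :: L).reverse ++ [a] := by simp
      have h2 : (b :: L).reverse ≠ [] := by simp
      rw [h1, cwAux_concat w a _ h2, cwAux_reverse w hw (b :: L)]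
      have h3 : (b :: L).reverse.getLast h2 = b := by
        rw [getLast_reverse]
        · simp
      rw [h3, hw b a]
      simp [Nat.add_comm]

theorem cwAux_take_drop (w : V → V → ℕ) (L : List V) (k : ℕ) (hk : k < L.length) :
    cwAux w L = cwAux w (L.take (k + 1)) + cwAux w (L.drop k) := by
  have h1 : L = L.take k ++ L[k] :: L.drop (k + 1) := by
    conv_lhs => rw [← List.take_append_drop k L, List.drop_eq_getElem_cons hk]
  have h2 : L.take (k + 1) = L.take k ++ [L[k]] := by
    rw [List.take_succ]
    simp [List.getElem?_eq_getElem hk]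
  have h3 : L.drop k = L[k] :: L.drop (k+1) := List.drop_eq_getElem_cons hk
  calc cwAux w L = cwAux w (L.take k ++ L[k] :: L.drop (k+1)) := by rw [← h1]
    _ = cwAux w (L.take k ++ [L[k]]) + cwAux w (L[k] :: L.drop (k+1)) := by
        rw [cwAux_split]
    _ = cwAux w (L.take (k+1)) + cwAux w (L.drop k) := by rw [h2, h3]

theorem getLast_take' (L : List V) (d : V) (i : ℕ) (hi : i < L.length) (h : L.take (i+1) ≠ []) :
    (L.take (i + 1)).getLast h = L.getD i d := by
  rw [List.getLast_eq_getElem, List.getD_eq_getElem L d hi]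
  have hlen : (L.take (i+1)).length = i + 1 := by
    rw [List.length_take]; omega
  simp only [hlen, Nat.add_sub_cancel, List.getElem_take]

theorem getLast_drop' (L : List V) (i : ℕ) (h : L.drop i ≠ [])
    (h' : L ≠ []) : (L.drop i).getLast h = L.getLast h' := by
  have h0 : (L.take i ++ L.drop i).getLast? = (L.drop i).getLast? := by
    rw [List.getLast?_append, List.getLast?_eq_getLast h]
    rfl
  rw [List.take_append_drop] at h0
  rw [List.getLast?_eq_getLast h', List.getLast?_eq_getLast h] at h0
  exact (Option.some_inj.mp h0).symm

theorem getLast_congr (L L' : List V) (h : L = L') (hL : L ≠ []) (hL' : L' ≠ []) :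
    L.getLast hL = L'.getLast hL' := by subst h; rfl

theorem not_nodup_decomp : ∀ (L : List V), ¬L.Nodup →
    ∃ (a : V) (l1 l2 l3 : List V), L = l1 ++ a :: (l2 ++ a :: l3)
  | [], h => absurd List.nodup_nil h
  | b :: t, h => by
      rw [List.nodup_cons] at h
      push_neg at h
      by_cases hb : b ∈ t
      · obtain ⟨t1, t2, rfl⟩ := List.append_of_mem hb
        exact ⟨b, [], t1, t2, rfl⟩
      · obtain ⟨a, l1, l2, l3, rfl⟩ := not_nodup_decomp t (h hb)
        exact ⟨a, b :: l1, l2, l3, rfl⟩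

theorem simplify_walk (E : V → V → Prop) (w : V → V → ℕ) :
    ∀ (n : ℕ) (L : List V), L.length ≤ n → L ≠ [] → List.Chain' E L →
    ∃ M : List V, M ≠ [] ∧ List.Chain' E M ∧ M.Nodup ∧
      M.head? = L.head? ∧ M.getLast? = L.getLast? ∧ cwAux w M ≤ cwAux w L := by
  intro n
  induction n with
  | zero => intro L hL hne _; simp at hL; exact absurd hL hne
  | succ m IH =>
    intro L hL hne hch
    by_cases hnd : L.Nodup
    · exact ⟨L, hne, hch, hnd, rfl, rfl, le_refl _⟩
    · obtain ⟨a, l1, l2, l3, rfl⟩ := not_nodup_decomp L hnd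
      have hch1 : List.Chain' E (l1 ++ a :: (l2 ++ a :: l3)) := hch
      rw [show List.Chain' E (l1 ++ a :: (l2 ++ a :: l3)) ↔ _ from List.isChain_split] at hch1
      obtain ⟨c1, c2⟩ := hch1
      have hc2' : List.Chain' E ((a :: l2) ++ a :: l3) := c2
      rw [show List.Chain' E ((a :: l2) ++ a :: l3) ↔ _ from List.isChain_split] at hc2'
      have hch' : List.Chain' E (l1 ++ a :: l3) := List.isChain_split.mpr ⟨c1, hc2'.2⟩
      have hlen : (l1 ++ a :: l3).length ≤ m := by
        simp only [List.length_append, List.length_cons] at hL ⊢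
        omega
      obtain ⟨M, h1, h2, h3, h4, h5, h6⟩ := IH (l1 ++ a :: l3) hlen (by simp) hch'
      refine ⟨M, h1, h2, h3, ?_, ?_, ?_⟩
      · rw [h4]; cases l1 <;> simp
      · rw [h5]
        rw [List.getLast?_append, List.getLast?_append]
        have e0 : (a :: (l2 ++ a :: l3)).getLast? = (a :: l3).getLast? := by
          rw [show a :: (l2 ++ a :: l3) = (a :: l2) ++ (a :: l3) from rfl,
            List.getLast?_append, List.getLast?_eq_getLast (l := a :: l3) (by simp)]
          rfl
        rw [e0]
      · refine le_trans h6 ?_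
        have e1 : cwAux w (l1 ++ a :: (l2 ++ a :: l3)) =
            cwAux w (l1 ++ [a]) + cwAux w (a :: (l2 ++ a :: l3)) :=
          cwAux_split w a (l2 ++ a :: l3) l1
        have e2 : cwAux w (a :: (l2 ++ a :: l3)) =
            cwAux w ((a :: l2) ++ [a]) + cwAux w (a :: l3) := cwAux_split w a l3 (a :: l2)
        have e3 : cwAux w (l1 ++ a :: l3) =
            cwAux w (l1 ++ [a]) + cwAux w (a :: l3) := cwAux_split w a l3 l1
        omega

theorem extract_cycle (E : V → V → Prop) (hE : Symmetric E) (w : V → V → ℕ)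
    (hw : ∀ a b, w a b = w b a) :
    ∀ (L : List V) (s : V) (M : List V), List.Chain' E (s :: L) → List.Chain' E (s :: M) →
      (s :: L).Nodup → (s :: M).Nodup →
      (s :: L).getLast (by simp) = (s :: M).getLast (by simp) →
      L ≠ M →
      ∃ v' c', IsUCycleThrough E v' c' ∧
        natWalkWeight w v' c' ≤ cwAux w (s :: L) + cwAux w (s :: M) := by
  intro L
  induction L with
  | nil =>
    intro s M _ _ _ hndM hlast hLM
    cases M with
    | nil => exact absurd rfl hLM
    | cons y M' =>
      exfalso
      rw [List.getLast_singleton, List.getLast_cons (by simp : y :: M' ≠ [])] at hlast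
      exact (List.nodup_cons.mp hndM).1 (hlast ▸ List.getLast_mem (by simp : y :: M' ≠ []))
  | cons x L'' IH =>
    intro s M hchL hchM hndL hndM hlast hLM
    cases M with
    | nil =>
      exfalso
      rw [List.getLast_singleton, List.getLast_cons (by simp : x :: L'' ≠ [])] at hlast
      exact (List.nodup_cons.mp hndL).1 (hlast ▸ List.getLast_mem (by simp : x :: L'' ≠ []))
    | cons y M' =>
      by_cases hxy : x = y
      · subst hxy
        have hne' : L'' ≠ M' := fun h => hLM (by rw [h])
        have hl1 : (x :: L'').getLast (by simp) = (x :: M').getLast (by simp) := by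
          rw [List.getLast_cons (by simp : x :: L'' ≠ []),
            List.getLast_cons (by simp : x :: M' ≠ [])] at hlast
          exact hlast
        obtain ⟨v', c', hcyc, hwt⟩ := IH x M' hchL.tail hchM.tail
          ((List.nodup_cons.mp hndL).2) ((List.nodup_cons.mp hndM).2) hl1 hne'
        refine ⟨v', c', hcyc, ?_⟩
        rw [cwAux_cons_cons, cwAux_cons_cons]
        omega
      · -- divergence: build cycle directly
        classical
        set P1 := x :: L'' with hP1def
        set N := y :: M' with hNdef
        set p : V → Bool := fun v => !(decide (v ∈ N)) with hp
        set U := P1.takeWhile p with hUdef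
        set D := P1.dropWhile p with hDdef
        have hUD : U ++ D = P1 := by
          rw [hUdef, hDdef]; exact List.takeWhile_append_dropWhile
        -- the common endpoint
        have hlast' : P1.getLast (by simp) = N.getLast (by simp) := by
          rw [List.getLast_cons (by simp : P1 ≠ []),
            List.getLast_cons (by simp : N ≠ [])] at hlast
          exact hlast
        have htP1 : P1.getLast (by simp) ∈ P1 := List.getLast_mem _
        have htN : P1.getLast (by simp) ∈ N := hlast' ▸ List.getLast_mem _
        have hDne : D ≠ [] := by
          intro h
          have hUP : U = P1 := by rw [← hUD, h, List.append_nil]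
          have hmem : P1.getLast (by simp) ∈ U := by rw [hUP]; exact htP1
          rw [hUdef] at hmem
          have := List.mem_takeWhile_imp hmem
          simp only [hp, Bool.not_eq_true', decide_eq_false_iff_not] at this
          exact this htN
        set z := D.head hDne with hzdef
        have hz : z ∈ N := by
          have := List.head_dropWhile_not p (l := P1) (by rw [← hDdef]; exact hDne)
          simp only [hp, Bool.not_eq_false', decide_eq_true_eq] at this
          exact this
        have hUnotN : ∀ u ∈ U, u ∉ N := by
          intro u hu
          have := List.mem_takeWhile_imp (hUdef ▸ hu)
          simp only [hp, Bool.not_eq_true', decide_eq_false_iff_not] at this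
          exact this
        have hP1eq : P1 = U ++ z :: D.tail := by
          rw [← hUD]; congr 1; rw [hzdef]; exact (List.cons_head_tail hDne).symm
        obtain ⟨Y, Z, hNYZ⟩ := List.append_of_mem hz
        -- nodup facts
        have hndP1 : P1.Nodup := (List.nodup_cons.mp hndL).2
        have hsP1 : s ∉ P1 := (List.nodup_cons.mp hndL).1
        have hndN : N.Nodup := (List.nodup_cons.mp hndM).2
        have hsN : s ∉ N := (List.nodup_cons.mp hndM).1
        have hndYZ : (z :: (Y ++ Z)).Nodup := List.nodup_middle.mp (hNYZ ▸ hndN)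
        have hzY : z ∉ Y := fun h => (List.nodup_cons.mp hndYZ).1 (List.mem_append_left _ h)
        have hndY : Y.Nodup := ((List.nodup_append).mp (List.nodup_cons.mp hndYZ).2).1
        have hYN : ∀ v ∈ Y, v ∈ N := fun v hv => hNYZ ▸ List.mem_append_left _ hv
        have hUP1 : ∀ u ∈ U, u ∈ P1 := fun u hu =>
          (List.takeWhile_sublist p).mem (hUdef ▸ hu)
        have hndU : U.Nodup := (List.takeWhile_sublist p).nodup hndP1
        have hzU : z ∉ U := fun h => hUnotN z h hz
        -- chains
        have hchP1' : List.Chain' E ((s :: U) ++ z :: D.tail) := by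
          have e : s :: P1 = (s :: U) ++ z :: D.tail := by rw [hP1eq]; rfl
          exact e ▸ hchL
        have C1 : List.Chain' E ((s :: U) ++ [z]) := (List.isChain_split.mp hchP1').1
        have hchN' : List.Chain' E ((s :: Y) ++ z :: Z) := by
          have e : s :: N = (s :: Y) ++ z :: Z := by rw [hNYZ]; rfl
          exact e ▸ hchM
        have C2 : List.Chain' E ((s :: Y) ++ [z]) := (List.isChain_split.mp hchN').1
        have C2' : List.Chain' E (z :: (Y.reverse ++ [s])) := by
          have hrev : ((s :: Y) ++ [z]).reverse = z :: (Y.reverse ++ [s]) := by simp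
          rw [← hrev, show List.Chain' E ((s :: Y) ++ [z]).reverse ↔ _ from List.isChain_reverse]
          exact List.IsChain.imp (fun a b h => hE h) C2
        have Cfull : List.Chain' E ((s :: U) ++ z :: (Y.reverse ++ [s])) :=
          List.isChain_split.mpr ⟨C1, C2'⟩
        refine ⟨s, U ++ z :: (Y.reverse ++ [s]), ⟨⟨Cfull, ?_⟩, ?_, ?_⟩, ?_⟩
        · -- getLast = s
          have e : s :: (U ++ z :: (Y.reverse ++ [s])) = (s :: U ++ z :: Y.reverse) ++ [s] := by
            simp
          exact (getLast_congr _ _ e (by simp) (by simp)).trans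
            (List.getLast_append_singleton _)
        · -- length
          have hUY : U ≠ [] ∨ Y ≠ [] := by
            by_contra h
            push_neg at h
            obtain ⟨hU0, hY0⟩ := h
            have hzx : x = z := by
              have := hP1eq
              rw [hU0, List.nil_append, hP1def] at this
              exact (List.cons.injEq _ _ _ _ ▸ this).1
            have hzy : y = z := by
              have := hNYZ
              rw [hY0, List.nil_append, hNdef] at this
              exact (List.cons.injEq _ _ _ _ ▸ this).1
            exact hxy (hzx.trans hzy.symm)
          rcases hUY with h | h <;>
            · have := List.length_pos_iff.mpr h
              simp only [List.length_append, List.length_cons, List.length_reverse]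
              omega
        · -- nodup
          rw [List.nodup_middle, List.nodup_cons]
          constructor
          · intro hmem
            rcases List.mem_append.mp hmem with h | h
            · exact hzU h
            · rcases List.mem_append.mp h with h | h
              · exact hzY (List.mem_reverse.mp h)
              · exact hsN (List.mem_singleton.mp h ▸ hz)
          · rw [List.nodup_append]
            refine ⟨hndU, ?_, ?_⟩
            · rw [List.nodup_append]
              refine ⟨List.nodup_reverse.mpr hndY, List.nodup_singleton s, ?_⟩
              intro a ha b hb hab
              exact hsN (List.mem_singleton.mp (hab ▸ hb) ▸ hYN a (List.mem_reverse.mp ha))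
            · intro a ha b hb hab
              rcases List.mem_append.mp (hab ▸ hb) with h | h
              · exact hUnotN a ha (hYN a (List.mem_reverse.mp h))
              · exact hsP1 (List.mem_singleton.mp h ▸ hUP1 a ha)
        · -- weight
          have e1 : cwAux w ((s :: U) ++ z :: (Y.reverse ++ [s])) =
              cwAux w ((s :: U) ++ [z]) + cwAux w (z :: (Y.reverse ++ [s])) :=
            cwAux_split w z (Y.reverse ++ [s]) (s :: U)
          have e2 : cwAux w (z :: (Y.reverse ++ [s])) = cwAux w ((s :: Y) ++ [z]) := by
            rw [← cwAux_reverse w hw ((s :: Y) ++ [z])]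
            congr 1
            simp
          have e3 : cwAux w (s :: P1) = cwAux w ((s :: U) ++ [z]) + cwAux w (z :: D.tail) := by
            rw [show s :: P1 = (s :: U) ++ z :: D.tail from by rw [hP1eq]; rfl]
            exact cwAux_split w z D.tail (s :: U)
          have e4 : cwAux w (s :: N) = cwAux w ((s :: Y) ++ [z]) + cwAux w (z :: Z) := by
            rw [show s :: N = (s :: Y) ++ z :: Z from by rw [hNYZ]; rfl]
            exact cwAux_split w z Z (s :: Y)
          show cwAux w (s :: (U ++ z :: (Y.reverse ++ [s]))) ≤ _
          rw [show s :: (U ++ z :: (Y.reverse ++ [s])) = (s :: U) ++ z :: (Y.reverse ++ [s])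
            from rfl]
          omega

theorem natWalkWeight_eq_cwAux (w : V → V → ℕ) (s : V) (p : List V) :
    natWalkWeight w s p = cwAux w (s :: p) := rfl

theorem isWalkFrom_iff (E : V → V → Prop) (s t : V) (p : List V) :
    IsWalkFrom E s t p ↔ List.Chain' E (s :: p) ∧
      (s :: p).getLast (List.cons_ne_nil s p) = t := Iff.rfl

theorem walk_lower (E : V → V → Prop) (hE : Symmetric E) (w : V → V → ℕ)
    (hw : ∀ a b, w a b = w b a) {s0 : V} {c0 : List V}
    (hmin : ∀ v' c', IsUCycleThrough E v' c' → natWalkWeight w s0 c0 ≤ natWalkWeight w v' c')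
    (s t : V) (r : List V) (hr : IsWalkFrom E s t r) (hnd : (s :: r).Nodup)
    (h2 : 2 * cwAux w (s :: r) ≤ natWalkWeight w s0 c0) :
    ∀ q, IsWalkFrom E s t q → cwAux w (s :: r) ≤ cwAux w (s :: q) := by
  intro q hq
  obtain ⟨M, hM1, hM2, hM3, hM4, hM5, hM6⟩ :=
    simplify_walk E w (s :: q).length (s :: q) le_rfl (by simp) hq.1
  -- M = s :: M.tail
  have hhead : M.head hM1 = s := by
    have := hM4
    rw [List.head?_eq_head hM1] at this
    simp only [List.head?_cons] at this
    exact Option.some_inj.mp this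
  have hMeq : M = s :: M.tail := by
    conv_lhs => rw [← List.cons_head_tail hM1]
    rw [hhead]
  set q' := M.tail with hq'def
  have hch' : List.Chain' E (s :: q') := hMeq ▸ hM2
  have hnd' : (s :: q').Nodup := hMeq ▸ hM3
  have hcw' : cwAux w (s :: q') ≤ cwAux w (s :: q) := le_trans (le_of_eq (by rw [← hMeq])) hM6
  have hlast' : (s :: q').getLast (by simp) = t := by
    have h1 : M.getLast hM1 = (s :: q).getLast (by simp) := by
      have := hM5
      rw [List.getLast?_eq_getLast hM1, List.getLast?_eq_getLast (l := s :: q) (by simp)] at this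
      exact Option.some_inj.mp this
    rw [← getLast_congr M (s :: q') hMeq hM1 (by simp), h1, hq.2]
  by_cases heq : q' = r
  · rw [← heq]; exact hcw'
  · obtain ⟨v', c', hcyc, hwt⟩ := extract_cycle E hE w hw q' s r hch' hr.1 hnd' hnd
      (by rw [hlast', hr.2]) heq
    have hW := hmin v' c' hcyc
    omega

theorem walkWeight_natCast (w : V → V → ℕ) (s : V) (p : List V) :
    walkWeight (fun a b => ((w a b : ℕ) : NNReal)) s p = (natWalkWeight w s p : ℝ≥0∞) := by
  unfold walkWeight natWalkWeight
  generalize (s :: p) = L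
  induction L generalizing p with
  | nil => simp
  | cons a L IH =>
    cases p with
    | nil => simp
    | cons b p' =>
      simp only [List.zipWith_cons_cons, List.sum_cons, IH p']
      push_cast
      ring

theorem gdist_le_walk (E : V → V → Prop) (w' : V → V → NNReal) {s t : V} {p : List V}
    (h : IsWalkFrom E s t p) : gdist E w' s t ≤ walkWeight w' s p := by
  exact iInf₂_le p h

theorem le_gdist (E : V → V → Prop) (w' : V → V → NNReal) {s t : V} {X : ℝ≥0∞}
    (h : ∀ p, IsWalkFrom E s t p → X ≤ walkWeight w' s p) : X ≤ gdist E w' s t :=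
  le_iInf₂ h

end CritAux

theorem stmt7 (E : V → V → Prop) (hE : Symmetric E) (w : V → V → ℕ)
    (hw : ∀ a b, w a b = w b a) (s : V) (c : List V)
    (hc : IsUCycleThrough E s c)
    (hmin : ∀ (v' : V) (c' : List V), IsUCycleThrough E v' c' →
      natWalkWeight w s c ≤ natWalkWeight w v' c') :
    ∃ i : ℕ, i + 1 ≤ c.length ∧
      ((natWalkWeight w s c + 1) / 2 - w ((s :: c).getD i s) ((s :: c).getD (i + 1) s)
          ≤ natWalkWeight w s (c.take i) ∧
        natWalkWeight w s (c.take i) ≤ natWalkWeight w s c / 2) ∧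
      ((natWalkWeight w s c + 1) / 2 - w ((s :: c).getD i s) ((s :: c).getD (i + 1) s)
          ≤ natWalkWeight w ((s :: c).getD (i + 1) s) (c.drop (i + 1)) ∧
        natWalkWeight w ((s :: c).getD (i + 1) s) (c.drop (i + 1))
          ≤ natWalkWeight w s c / 2) ∧
      gdist E (fun a b => ((w a b : ℕ) : NNReal)) s ((s :: c).getD i s)
        = (natWalkWeight w s (c.take i) : ℝ≥0∞) ∧
      gdist E (fun a b => ((w a b : ℕ) : NNReal)) ((s :: c).getD (i + 1) s) s
        = (natWalkWeight w ((s :: c).getD (i + 1) s) (c.drop (i + 1)) : ℝ≥0∞) := by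
  classical
  obtain ⟨⟨hchain0, hlast0⟩, hlen3, hnodup⟩ := hc
  have hchain : List.Chain' E (s :: c) := hchain0
  have hcne : c ≠ [] := by intro h; rw [h] at hlen3; simp at hlen3
  have hclen : 3 ≤ c.length := hlen3
  set W := natWalkWeight w s c with hWdef
  have hWcw : W = cwAux w (s :: c) := rfl
  set P : ℕ → ℕ := fun j => cwAux w ((s :: c).take (j + 1)) with hPdef
  have hP0 : P 0 = 0 := by simp [hPdef]
  set i := Nat.findGreatest (fun j => P j ≤ W / 2) (c.length - 1) with hidef
  have hil : i ≤ c.length - 1 := Nat.findGreatest_le _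
  have hi1l : i + 1 ≤ c.length := by omega
  have hilc : i < c.length := by omega
  have hi_lt : i < (s :: c).length := by simp; omega
  have hi1_lt : i + 1 < (s :: c).length := by simp; omega
  have hiP : P i ≤ W / 2 := by
    by_cases h0 : i = 0
    · rw [h0, hP0]; exact Nat.zero_le _
    · exact Nat.findGreatest_of_ne_zero (P := fun j => P j ≤ W / 2) (n := c.length - 1) hidef.symm h0
  have hPfull : P c.length = W := by
    rw [hPdef]
    simp only
    rw [List.take_of_length_le (by simp)]
    exact hWcw.symm
  have hi1 : (W + 1) / 2 ≤ P (i + 1) := by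
    by_cases hi : i = c.length - 1
    · have : i + 1 = c.length := by omega
      rw [this, hPfull]
      omega
    · have hk : Nat.findGreatest (fun j => P j ≤ W / 2) (c.length - 1) < i + 1 :=
        Nat.lt_succ_self i
      have hnot0 : ¬ ((fun j => P j ≤ W / 2) (i + 1)) :=
        Nat.findGreatest_is_greatest (P := fun j => P j ≤ W / 2) hk (by omega)
      have hnot : ¬ (P (i + 1) ≤ W / 2) := hnot0
      omega
  -- the critical edge
  set vi := (s :: c).getD i s with hvidef
  set vi1 := (s :: c).getD (i + 1) s with hvi1def
  have htne : (s :: c).take (i + 1) ≠ [] := by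
    rw [List.take_succ_cons]; simp
  have hgl : ((s :: c).take (i + 1)).getLast htne = vi := getLast_take' (s :: c) s i hi_lt _
  have htake : (s :: c).take (i + 2) = (s :: c).take (i + 1) ++ [(s :: c)[i + 1]] := by
    rw [List.take_succ]
    simp [List.getElem?_eq_getElem hi1_lt]
  have hgetD1 : vi1 = (s :: c)[i + 1] := by rw [hvi1def, List.getD_eq_getElem _ _ hi1_lt]
  have edge : P (i + 1) = P i + w vi vi1 := by
    rw [hPdef]
    simp only
    rw [show i + 1 + 1 = i + 2 from rfl, htake, cwAux_concat w _ _ htne, hgl, hgetD1]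
  set Sf := cwAux w ((s :: c).drop (i + 1)) with hSfdef
  have split2 : W = P (i + 1) + Sf := by
    rw [hWcw]; exact cwAux_take_drop w (s :: c) (i + 1) hi1_lt
  have htakeeq : s :: c.take i = (s :: c).take (i + 1) := List.take_succ_cons.symm
  have hPr : natWalkWeight w s (c.take i) = P i := by
    rw [natWalkWeight_eq_cwAux, htakeeq]
  have hdropeq : (s :: c).drop (i + 1) = vi1 :: c.drop (i + 1) := by
    rw [List.drop_succ_cons, List.drop_eq_getElem_cons hilc]
    congr 1
    rw [hgetD1]
    simp [List.getElem_cons_succ]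
  have hSr : natWalkWeight w vi1 (c.drop (i + 1)) = Sf := by
    rw [natWalkWeight_eq_cwAux, hSfdef, hdropeq]
  -- the two arc walks
  have walkpre : IsWalkFrom E s vi (c.take i) := by
    constructor
    · have h1 : List.Chain' E ((s :: c).take (i + 1)) := hchain.take _
      rw [← htakeeq] at h1
      exact h1
    · exact (getLast_congr _ _ htakeeq (by simp) htne).trans hgl
  have hdropne : (s :: c).drop (i + 1) ≠ [] := by
    have : ((s :: c).drop (i + 1)).length = c.length - i := by simp
    intro h
    rw [h] at this
    simp at this
    omega
  have hglast_c : c.getLast hcne = s := by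
    have h1 := List.getLast_cons (a := s) hcne
    rw [h1] at hlast0
    exact hlast0
  have walksuf : IsWalkFrom E vi1 s (c.drop (i + 1)) := by
    constructor
    · have h1 : List.Chain' E ((s :: c).drop (i + 1)) := hchain.drop _
      rw [hdropeq] at h1
      exact h1
    · refine (getLast_congr _ _ hdropeq.symm (by simp) hdropne).trans ?_
      rw [getLast_drop' (s :: c) (i + 1) hdropne (by simp)]
      exact hlast0
  -- nodup of the arcs
  have hndpre : (s :: c.take i).Nodup := by
    rw [List.nodup_cons]
    refine ⟨?_, List.Nodup.sublist (List.take_sublist i c) hnodup⟩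
    intro hs
    have hdne : c.drop i ≠ [] := by
      intro h
      have := congrArg List.length h
      simp at this
      omega
    have hsdrop : s ∈ c.drop i := by
      rw [← hglast_c, ← getLast_drop' c i hdne hcne]
      exact List.getLast_mem hdne
    have hnd2 := hnodup
    rw [← List.take_append_drop i c, List.nodup_append] at hnd2
    exact hnd2.2.2 s hs s hsdrop rfl
  have hndsuf : (vi1 :: c.drop (i + 1)).Nodup := by
    rw [← hdropeq, List.drop_succ_cons]
    exact List.Nodup.sublist (List.drop_sublist i c) hnodup
  -- gdist equalities
  have hgd1 : gdist E (fun a b => ((w a b : ℕ) : NNReal)) s vi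
      = (natWalkWeight w s (c.take i) : ℝ≥0∞) := by
    refine le_antisymm ?_ ?_
    · calc gdist E (fun a b => ((w a b : ℕ) : NNReal)) s vi
          ≤ walkWeight (fun a b => ((w a b : ℕ) : NNReal)) s (c.take i) :=
            gdist_le_walk E _ walkpre
        _ = (natWalkWeight w s (c.take i) : ℝ≥0∞) := walkWeight_natCast w s (c.take i)
    · refine le_gdist E _ (fun q hq => ?_)
      rw [walkWeight_natCast]
      refine Nat.cast_le.mpr ?_
      rw [natWalkWeight_eq_cwAux, natWalkWeight_eq_cwAux]
      refine walk_lower E hE w hw hmin s vi (c.take i) walkpre hndpre ?_ q hq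
      rw [← natWalkWeight_eq_cwAux, hPr, ← hWdef]
      omega
  have hgd2 : gdist E (fun a b => ((w a b : ℕ) : NNReal)) vi1 s
      = (natWalkWeight w vi1 (c.drop (i + 1)) : ℝ≥0∞) := by
    refine le_antisymm ?_ ?_
    · calc gdist E (fun a b => ((w a b : ℕ) : NNReal)) vi1 s
          ≤ walkWeight (fun a b => ((w a b : ℕ) : NNReal)) vi1 (c.drop (i + 1)) :=
            gdist_le_walk E _ walksuf
        _ = _ := walkWeight_natCast w vi1 (c.drop (i + 1))
    · refine le_gdist E _ (fun q hq => ?_)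
      rw [walkWeight_natCast]
      refine Nat.cast_le.mpr ?_
      rw [natWalkWeight_eq_cwAux, natWalkWeight_eq_cwAux]
      refine walk_lower E hE w hw hmin vi1 s (c.drop (i + 1)) walksuf hndsuf ?_ q hq
      rw [← natWalkWeight_eq_cwAux, hSr, ← hWdef]
      omega
  refine ⟨i, hi1l, ⟨?_, ?_⟩, ⟨?_, ?_⟩, hgd1, hgd2⟩
  · rw [← hvidef, ← hvi1def, hPr]; omega
  · rw [hPr]; omega
  · rw [← hvidef, ← hvi1def, hSr]; omega
  · rw [← hvi1def, hSr]; omega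
end

section
/- (Half-cycle shortest path) If C is a minimum-weight cycle in an undirected graph with non-negative weights, and P is a subpath of C with weight wt(P) satisfying 2·wt(P) ≤ wt(C), then P is a shortest path in G between its endpoints. -/
open scoped ENNReal

variable {V : Type*}

open List

section Helpers

variable (w : V → V → NNReal)

lemma hc_walkWeight_nil (a : V) : walkWeight w a [] = 0 := rfl

lemma hc_walkWeight_cons (a x : V) (l : List V) :
    walkWeight w a (x :: l) = (w a x : ℝ≥0∞) + walkWeight w x l := by
  simp [walkWeight]

lemma hc_walkWeight_ne_top : ∀ (l : List V) (a : V), walkWeight w a l ≠ ⊤ := by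
  intro l
  induction l with
  | nil => intro a; simp [walkWeight]
  | cons x l ih =>
    intro a
    rw [hc_walkWeight_cons]
    exact ENNReal.add_ne_top.2 ⟨ENNReal.coe_ne_top, ih x⟩

lemma hc_walkWeight_append : ∀ (r : List V) (a : V) (s : List V),
    walkWeight w a (r ++ s)
      = walkWeight w a r + walkWeight w ((a :: r).getLast (cons_ne_nil _ _)) s := by
  intro r
  induction r with
  | nil => intro a s; simp [hc_walkWeight_nil, List.getLast_singleton]
  | cons x r ih =>
    intro a s
    rw [cons_append, hc_walkWeight_cons, hc_walkWeight_cons, ih x s, add_assoc,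
      List.getLast_cons (cons_ne_nil _ _)]

lemma hc_walkWeight_suffix_le (x : V) (A s : List V) :
    ∀ (T : List V) (a : V) (r : List V), a :: r = T ++ x :: A →
      walkWeight w x (A ++ s) ≤ walkWeight w a (r ++ s) := by
  intro T
  induction T with
  | nil =>
    intro a r h
    rw [nil_append] at h
    injection h with h1 h2
    subst h1; subst h2
    exact le_rfl
  | cons c T ih =>
    intro a r h
    rw [cons_append] at h
    injection h with h1 h2
    subst h1
    cases hm : T ++ x :: A with
    | nil => exact absurd hm (append_ne_nil_of_right_ne_nil _ (cons_ne_nil _ _))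
    | cons h0 tail =>
      subst h2
      rw [hm, cons_append, hc_walkWeight_cons]
      calc walkWeight w x (A ++ s) ≤ walkWeight w h0 (tail ++ s) := ih h0 tail hm.symm
        _ ≤ _ := self_le_add_left _ _

lemma hc_exists_first {P : V → Prop} : ∀ {l : List V}, (∃ x ∈ l, P x) →
    ∃ B x s₂, l = B ++ x :: s₂ ∧ P x ∧ ∀ y ∈ B, ¬ P y := by
  intro l
  induction l with
  | nil => rintro ⟨x, hx, -⟩; cases hx
  | cons c l ih =>
    intro h
    by_cases hc : P c
    · exact ⟨[], c, l, rfl, hc, by simp⟩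
    · obtain ⟨x, hx, hP⟩ := h
      rcases mem_cons.1 hx with rfl | hx
      · exact absurd hP hc
      · obtain ⟨B, x, s₂, rfl, h1, h2⟩ := ih ⟨x, hx, hP⟩
        refine ⟨c :: B, x, s₂, rfl, h1, ?_⟩
        intro y hy
        rcases mem_cons.1 hy with rfl | hy
        · exact hc
        · exact h2 y hy

lemma hc_getLast_eq {l : List V} (h : l ≠ []) {a : V} (h2 : l.getLast? = some a) :
    l.getLast h = a := by
  rw [getLast?_eq_getLast h] at h2
  exact Option.some.inj h2

lemma hc_mem_of_getLast? {l : List V} {a : V} (h2 : l.getLast? = some a) : a ∈ l := by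
  have h : l ≠ [] := by rintro rfl; simp at h2
  exact hc_getLast_eq h h2 ▸ getLast_mem h

lemma hc_chain'_cons_iff {E : V → V → Prop} {a : V} {l : List V} :
    List.Chain' E (a :: l) ↔ List.Chain E a l := Iff.rfl

/-- r = [] when a closed simple walk from `a` ends at `a`. -/
lemma hc_base {r : List V} {a : V} (hlast : (a :: r).getLast (cons_ne_nil _ _) = a)
    (hnd : (a :: r).Nodup) : r = [] := by
  cases r with
  | nil => rfl
  | cons x r =>
    exfalso
    rw [getLast_cons (cons_ne_nil _ _)] at hlast
    exact (nodup_cons.1 hnd).1 (hlast ▸ getLast_mem (cons_ne_nil x r))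

/-- Loop erasure: every walk contains a simple walk of no greater weight. -/
lemma hc_loop_erase (E : V → V → Prop) :
    ∀ (n : ℕ) (p : List V) (a t : V), p.length ≤ n → IsWalkFrom E a t p →
      ∃ p', IsWalkFrom E a t p' ∧ (a :: p').Nodup ∧ p' ⊆ p ∧
        walkWeight w a p' ≤ walkWeight w a p := by
  intro n
  induction n with
  | zero =>
    intro p a t hlen hw
    rw [length_eq_zero_iff.1 (Nat.le_zero.1 hlen)] at hw ⊢
    exact ⟨[], hw, by simp, by simp, le_rfl⟩
  | succ n ih =>
    intro p a t hlen hwalk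
    obtain ⟨hch, hlast⟩ := hwalk
    by_cases ha : a ∈ p
    · obtain ⟨p₁, p₂, rfl⟩ := append_of_mem ha
      have hch' : List.Chain E a p₂ :=
        hc_chain'_cons_iff.1 ((hc_chain'_cons_iff.2 hch).suffix ⟨a :: p₁, by simp⟩)
      have hlast' : (a :: p₂).getLast (cons_ne_nil _ _) = t := by
        apply hc_getLast_eq
        have h0 : (a :: (p₁ ++ a :: p₂)).getLast? = some t := by
          rw [getLast?_eq_getLast (cons_ne_nil _ _), hlast]
        rw [← h0, show a :: (p₁ ++ a :: p₂) = (a :: p₁) ++ (a :: p₂) by simp,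
          getLast?_append_of_ne_nil _ (cons_ne_nil _ _)]
      have hlen' : p₂.length ≤ n := by
        simp only [length_append, length_cons] at hlen; omega
      obtain ⟨p', h1, h2, h3, h4⟩ := ih p₂ a t hlen' ⟨hch', hlast'⟩
      refine ⟨p', h1, h2, fun z hz => by simp [h3 hz], h4.trans ?_⟩
      have : p₁ ++ a :: p₂ = (p₁ ++ [a]) ++ p₂ := by simp
      rw [this, hc_walkWeight_append]
      have hg : ((a :: (p₁ ++ [a]))).getLast (cons_ne_nil _ _) = a := by
        apply hc_getLast_eq
        rw [show a :: (p₁ ++ [a]) = (a :: p₁) ++ [a] by simp, getLast?_concat]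
      rw [hg]
      exact self_le_add_left _ _
    · cases p with
      | nil => exact ⟨[], ⟨hch, hlast⟩, by simp, by simp, le_rfl⟩
      | cons x rest =>
        have hch2 : List.Chain E x rest := (List.chain_cons.1 hch).2
        have hax : E a x := (List.chain_cons.1 hch).1
        have hlast2 : (x :: rest).getLast (cons_ne_nil _ _) = t := by
          rw [← hlast, getLast_cons (cons_ne_nil _ _)]
        obtain ⟨p'', h1, h2, h3, h4⟩ := ih rest x t (by simpa using Nat.lt_succ_iff.1 hlen)
          ⟨hch2, hlast2⟩
        refine ⟨x :: p'', ⟨List.chain_cons.2 ⟨hax, h1.1⟩, ?_⟩, ?_, ?_, ?_⟩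
        · rw [getLast_cons (cons_ne_nil _ _)]; exact h1.2
        · rw [nodup_cons]
          refine ⟨?_, h2⟩
          intro hmem
          rcases mem_cons.1 hmem with rfl | hmem
          · exact ha (mem_cons_self)
          · exact ha (mem_cons_of_mem _ (h3 hmem))
        · intro z hz
          rcases mem_cons.1 hz with rfl | hz
          · exact mem_cons_self
          · exact mem_cons_of_mem _ (h3 hz)
        · rw [hc_walkWeight_cons, hc_walkWeight_cons]
          exact add_le_add_right h4 _

/-- Key lemma: a closed walk consisting of a simple path `a::r` followed by a simple
path `s` back to `a` (whose junction vertex is not on `s`) either contains a genuine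
undirected cycle of no greater weight, or its weight is at most twice that of `a::r`. -/
lemma hc_key (E : V → V → Prop) (hw : ∀ a b, w a b = w b a) :
    ∀ (n : ℕ) (s r : List V) (a : V), s.length ≤ n →
      List.Chain' E ((a :: r) ++ s) →
      ((a :: r) ++ s).getLast (by simp) = a →
      (a :: r).Nodup → s.Nodup →
      (a :: r).getLast (cons_ne_nil _ _) ∉ s →
      (∃ v' c', IsUCycleThrough E v' c' ∧ walkWeight w v' c' ≤ walkWeight w a (r ++ s)) ∨
        walkWeight w a (r ++ s) ≤ 2 * walkWeight w a r := by
  intro n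
  induction n with
  | zero =>
    intro s r a hlen hch hlast hndr hnds hjun
    obtain rfl : s = [] := length_eq_zero_iff.1 (Nat.le_zero.1 hlen)
    obtain rfl : r = [] := hc_base (by simpa using hlast) hndr
    right; simp [hc_walkWeight_nil]
  | succ n ih =>
    intro s r a hlen hch hlast hndr hnds hjun
    rcases eq_or_ne s [] with rfl | hs
    · obtain rfl : r = [] := hc_base (by simpa using hlast) hndr
      right; simp [hc_walkWeight_nil]
    have hlast? : ((a :: r) ++ s).getLast? = some a := by
      rw [getLast?_eq_getLast (by simp), hlast]
    have hsl : s.getLast? = some a := by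
      rw [← hlast?, getLast?_append_of_ne_nil _ hs]
    have haS : a ∈ s := hc_mem_of_getLast? hsl
    obtain ⟨B, x, s₂, hsdec, hxmem, hBmin⟩ :=
      hc_exists_first (P := fun z => z ∈ a :: r) ⟨a, haS, mem_cons_self⟩
    obtain ⟨T, A, hTA⟩ := append_of_mem hxmem
    obtain ⟨y, hy⟩ : ∃ y, (a :: r).getLast (cons_ne_nil _ _) = y := ⟨_, rfl⟩
    rw [hy] at hjun
    have hxS : x ∈ s := hsdec ▸ mem_append_right _ (mem_cons_self)
    have hxy : x ≠ y := fun h => hjun (h ▸ hxS)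
    have hyA? : (x :: A).getLast? = some y := by
      rw [← getLast?_append_of_ne_nil T (cons_ne_nil x A), ← hTA,
        getLast?_eq_getLast (cons_ne_nil _ _), hy]
    have hyA : (x :: A).getLast (cons_ne_nil _ _) = y := hc_getLast_eq _ hyA?
    have hA : A ≠ [] := by
      rintro rfl
      exact hxy (by simpa using hyA)
    have hnd2 : (x :: A).Nodup := ((nodup_append.1 (hTA ▸ hndr)).2).1
    have hxA : x ∉ A := (nodup_cons.1 hnd2).1
    have hndA : A.Nodup := (nodup_cons.1 hnd2).2
    obtain ⟨ch1, ch2, hjedge⟩ := List.isChain_append.1 hch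
    by_cases hdeg : B = [] ∧ A.length = 1
    · -- degenerate backtrack case: cancel the last edge of `r` with the first of `s`
      obtain ⟨rfl, hA1⟩ := hdeg
      obtain ⟨y₀, rfl⟩ := length_eq_one_iff.1 hA1
      have hyy : y = y₀ := by simpa using hyA.symm
      subst hyy
      rw [nil_append] at hsdec
      subst hsdec
      have hr : r ≠ [] := by
        rintro rfl
        have := congrArg length hTA
        simp [length_append] at this
      have hdrop : a :: r.dropLast = T ++ [x] := by
        have h1 : (a :: r).dropLast = a :: r.dropLast := dropLast_cons_of_ne_nil hr
        have h2 : (T ++ [x, y]).dropLast = T ++ [x] := by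
          rw [show T ++ [x, y] = (T ++ [x]) ++ [y] by simp, dropLast_concat]
        rw [← h1, hTA, h2]
      have hreq : r = r.dropLast ++ [y] := by
        have h3 : a :: r = a :: (r.dropLast ++ [y]) := by
          rw [show a :: (r.dropLast ++ [y]) = (a :: r.dropLast) ++ [y] from rfl, hdrop, hTA]
          simp
        injection h3
      have hlastr'? : (a :: r.dropLast).getLast? = some x := by rw [hdrop, getLast?_concat]
      have hlastr' : (a :: r.dropLast).getLast (cons_ne_nil _ _) = x := hc_getLast_eq _ hlastr'?
      have hpre : (a :: r.dropLast) <+: (a :: r) :=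
        ⟨[y], by rw [show (a :: r.dropLast) ++ [y] = a :: (r.dropLast ++ [y]) from rfl, ← hreq]⟩
      have hch2' := isChain_cons.1 ch2
      have hchain' : List.Chain' E ((a :: r.dropLast) ++ s₂) := by
        refine isChain_append.2 ⟨ch1.prefix hpre, hch2'.2, ?_⟩
        intro u hu v hv
        rw [hlastr'?, Option.mem_some_iff] at hu
        subst hu
        exact hch2'.1 v hv
      have hlast2 : ((a :: r.dropLast) ++ s₂).getLast (by simp) = a := by
        apply hc_getLast_eq
        rcases eq_or_ne s₂ [] with rfl | hs2
        · have hxa : x = a := by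
            have := hsl
            simp at this
            exact this
          rw [append_nil, hlastr'?, hxa]
        · rw [getLast?_append_of_ne_nil _ hs2, ← getLast?_append_of_ne_nil [x] hs2]
          exact hsl
      have hnds' := nodup_cons.1 hnds
      have hrec := ih s₂ r.dropLast a (by simpa using Nat.lt_succ_iff.1 hlen) hchain' hlast2
        (hndr.sublist hpre.sublist) hnds'.2 (by rw [hlastr']; exact hnds'.1)
      have e1 : walkWeight w a (r ++ (x :: s₂))
          = walkWeight w a r.dropLast + ((w x y : ℝ≥0∞) + ((w y x : ℝ≥0∞) + walkWeight w x s₂)) := by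
        rw [show r ++ (x :: s₂) = r.dropLast ++ (y :: x :: s₂) by rw [hreq]; simp]
        rw [hc_walkWeight_append, hlastr', hc_walkWeight_cons, hc_walkWeight_cons]
      have e2 : walkWeight w a (r.dropLast ++ s₂)
          = walkWeight w a r.dropLast + walkWeight w x s₂ := by
        rw [hc_walkWeight_append, hlastr']
      have e3 : walkWeight w a r = walkWeight w a r.dropLast + (w x y : ℝ≥0∞) := by
        conv_lhs => rw [hreq]
        rw [hc_walkWeight_append, hlastr', hc_walkWeight_cons, hc_walkWeight_nil, add_zero]
      rcases hrec with ⟨v', c', hcyc, hle⟩ | hineq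
      · refine Or.inl ⟨v', c', hcyc, hle.trans ?_⟩
        rw [e1, e2]
        exact add_le_add_right ((self_le_add_left _ _).trans (self_le_add_left _ _)) _
      · right
        rw [e1, e3]
        rw [e2] at hineq
        have hxyyx : (w y x : ℝ≥0∞) = (w x y : ℝ≥0∞) := by rw [hw y x]
        calc walkWeight w a r.dropLast + ((w x y : ℝ≥0∞) + ((w y x : ℝ≥0∞) + walkWeight w x s₂))
            = (walkWeight w a r.dropLast + walkWeight w x s₂)
                + ((w x y : ℝ≥0∞) + (w x y : ℝ≥0∞)) := by rw [hxyyx]; ring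
          _ ≤ 2 * walkWeight w a r.dropLast + ((w x y : ℝ≥0∞) + (w x y : ℝ≥0∞)) :=
              add_le_add_left hineq _
          _ = 2 * (walkWeight w a r.dropLast + (w x y : ℝ≥0∞)) := by ring
    · -- genuine cycle case
      left
      have hpreBx : (B ++ [x]) <+: s := ⟨s₂, by rw [hsdec]; simp⟩
      have hBxlast : ∀ (z : V), (z :: (B ++ [x])).getLast (cons_ne_nil _ _) = x := by
        intro z
        apply hc_getLast_eq
        rw [show z :: (B ++ [x]) = (z :: B) ++ [x] from rfl, getLast?_concat]
      refine ⟨x, A ++ (B ++ [x]), ⟨⟨?_, ?_⟩, ?_, ?_⟩, ?_⟩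
      · -- chain
        apply hc_chain'_cons_iff.1
        rw [show x :: (A ++ (B ++ [x])) = (x :: A) ++ (B ++ [x]) from rfl]
        refine isChain_append.2 ⟨ch1.suffix ⟨T, hTA.symm⟩, ch2.prefix hpreBx, ?_⟩
        intro u hu v hv
        rw [hyA?, Option.mem_some_iff] at hu
        subst hu
        refine hjedge y ?_ v ?_
        · rw [getLast?_eq_getLast (cons_ne_nil _ _), hy]
          rfl
        · rw [hsdec, show B ++ x :: s₂ = (B ++ [x]) ++ s₂ by simp,
            head?_append_of_ne_nil _ (by simp)]
          exact hv
      · -- getLast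
        apply hc_getLast_eq
        rw [show x :: (A ++ (B ++ [x])) = (x :: (A ++ B)) ++ [x] by simp, getLast?_concat]
      · -- length
        have l1 : 1 ≤ A.length := length_pos_iff.2 hA
        rcases not_and_or.1 hdeg with hB | hA1
        · have l2 : 1 ≤ B.length := length_pos_iff.2 hB
          simp only [length_append, length_cons]
          omega
        · have l2 : A.length ≠ 1 := hA1
          simp only [length_append, length_cons]
          omega
      · -- nodup
        refine nodup_append'.2 ⟨hndA, hnds.sublist hpreBx.sublist, ?_⟩
        intro z hzA hzBx
        rcases mem_append.1 hzBx with hzB | hzx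
        · exact hBmin z hzB (hTA ▸ mem_append_right _ (mem_cons_of_mem _ hzA))
        · rw [mem_singleton.1 hzx] at hzA
          exact hxA hzA
      · -- weight
        have w1 : walkWeight w x (A ++ (B ++ [x]))
            = walkWeight w x A + walkWeight w y (B ++ [x]) := by
          rw [hc_walkWeight_append, hyA]
        have w2 : walkWeight w x (A ++ s)
            = walkWeight w x A + (walkWeight w y (B ++ [x]) + walkWeight w x s₂) := by
          rw [hc_walkWeight_append, hyA, hsdec,
            show B ++ x :: s₂ = (B ++ [x]) ++ s₂ by simp, hc_walkWeight_append, hBxlast y]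
        calc walkWeight w x (A ++ (B ++ [x])) ≤ walkWeight w x (A ++ s) := by
              rw [w1, w2]
              exact add_le_add_right (self_le_add_right _ _) _
          _ ≤ walkWeight w a (r ++ s) := hc_walkWeight_suffix_le w x A s T a r hTA

end Helpers

theorem stmt8 (E : V → V → Prop) (hE : Symmetric E) (w : V → V → NNReal)
    (hw : ∀ a b, w a b = w b a) (a : V) (p q : List V) (hp : p ≠ [])
    (hc : IsUCycleThrough E a (p ++ q))
    (hmin : ∀ (v' : V) (c' : List V), IsUCycleThrough E v' c' →
      walkWeight w a (p ++ q) ≤ walkWeight w v' c')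
    (hhalf : 2 * walkWeight w a p ≤ walkWeight w a (p ++ q)) :
    walkWeight w a p = gdist E w a (p.getLast hp) := by
  obtain ⟨⟨hchain, hlast⟩, hlen3, hnd⟩ := hc
  set t := p.getLast hp with ht
  have hlastap : (a :: p).getLast (List.cons_ne_nil _ _) = t := by
    rw [List.getLast_cons hp]
  have hwalkp : IsWalkFrom E a t p :=
    ⟨hc_chain'_cons_iff.1 ((hc_chain'_cons_iff.2 hchain).prefix ⟨q, by simp⟩), hlastap⟩
  have hub : gdist E w a t ≤ walkWeight w a p := by
    unfold gdist
    exact iInf_le_of_le p (iInf_le_of_le hwalkp le_rfl)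
  have h0 : (a :: (p ++ q)).getLast? = some a := by
    rw [List.getLast?_eq_getLast (List.cons_ne_nil _ _), hlast]
  rcases eq_or_ne q [] with rfl | hq
  · -- degenerate: the "cycle" is all of p, so wt p = 0 and t = a
    rw [List.append_nil] at hhalf h0
    have hx : walkWeight w a p = 0 := by
      have hfin := hc_walkWeight_ne_top w p a
      have h2 : walkWeight w a p + walkWeight w a p ≤ walkWeight w a p + 0 := by
        rw [add_zero, ← two_mul]; exact hhalf
      exact _root_.le_antisymm ((ENNReal.add_le_add_iff_left hfin).1 h2) zero_le
    have hta : t = a := by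
      apply hc_getLast_eq hp
      rw [← List.getLast?_append_of_ne_nil [a] hp]
      exact h0
    rw [hx]
    refine (_root_.le_antisymm ?_ zero_le).symm
    have hwalk0 : IsWalkFrom E a t [] := ⟨List.Chain.nil, hta.symm⟩
    calc gdist E w a t ≤ walkWeight w a [] := by
          unfold gdist
          exact iInf_le_of_le [] (iInf_le_of_le hwalk0 le_rfl)
      _ = 0 := rfl
  · -- main case
    have hndq : q.Nodup := (List.nodup_append.1 hnd).2.1
    have hdisj := (List.nodup_append'.1 hnd).2.2
    have htp : t ∈ p := ht ▸ List.getLast_mem hp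
    have htq : t ∉ q := fun h => hdisj htp h
    have hql? : q.getLast? = some a := by
      rw [← h0, show a :: (p ++ q) = (a :: p) ++ q from rfl,
        List.getLast?_append_of_ne_nil _ hq]
    refine _root_.le_antisymm ?_ hub
    unfold gdist
    refine le_iInf fun p₀ => le_iInf fun hw₀ => ?_
    obtain ⟨p', hw', hnd', hsub', hle'⟩ := hc_loop_erase w E p₀.length p₀ a t le_rfl hw₀
    have hlastp' : (a :: p').getLast (List.cons_ne_nil _ _) = t := hw'.2
    obtain ⟨chp, chq, hjedge⟩ :=
      List.isChain_append.1 (show List.Chain' E ((a :: p) ++ q) from hc_chain'_cons_iff.2 hchain)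
    have hchain' : List.Chain' E ((a :: p') ++ q) := by
      refine List.isChain_append.2 ⟨hc_chain'_cons_iff.2 hw'.1, chq, ?_⟩
      intro u hu v hv
      rw [List.getLast?_eq_getLast (List.cons_ne_nil _ _), hlastp',
        Option.mem_some_iff] at hu
      subst hu
      refine hjedge t ?_ v hv
      rw [List.getLast?_eq_getLast (List.cons_ne_nil _ _), hlastap]
      rfl
    have hlastfull : ((a :: p') ++ q).getLast (by simp) = a := by
      apply hc_getLast_eq
      rw [List.getLast?_append_of_ne_nil _ hq, hql?]
    have key := hc_key w E hw q.length q p' a le_rfl hchain' hlastfull hnd' hndq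
      (by rw [hlastp']; exact htq)
    have d1 : walkWeight w a (p ++ q) = walkWeight w a p + walkWeight w t q := by
      rw [hc_walkWeight_append, hlastap]
    have d2 : walkWeight w a (p' ++ q) = walkWeight w a p' + walkWeight w t q := by
      rw [hc_walkWeight_append, hlastp']
    have hfinq := hc_walkWeight_ne_top w q t
    have hfinp' := hc_walkWeight_ne_top w p' a
    have hgoal : walkWeight w a p ≤ walkWeight w a p' := by
      rcases key with ⟨v', c', hcyc, hle⟩ | hineq
      · have h1 : walkWeight w a (p ++ q) ≤ walkWeight w a (p' ++ q) :=
          (hmin v' c' hcyc).trans hle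
        rw [d1, d2, add_comm (walkWeight w a p), add_comm (walkWeight w a p')] at h1
        exact (ENNReal.add_le_add_iff_left hfinq).1 h1
      · rw [d2, two_mul] at hineq
        have hqp' : walkWeight w t q ≤ walkWeight w a p' :=
          (ENNReal.add_le_add_iff_left hfinp').1 hineq
        have hpq : walkWeight w a p ≤ walkWeight w t q := by
          rw [d1, two_mul] at hhalf
          exact (ENNReal.add_le_add_iff_left (hc_walkWeight_ne_top w p a)).1 hhalf
        exact hpq.trans hqp'
    exact hgoal.trans hle'
end
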